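/- Let 0 < r < 1 and let α be irrational. Then there exist infinitely many N ∈ ℕ such that |{n ≤ N : r < |cos(nπα)|^n}| ≥ 5^{1/4}(1-r)^{1/4}N^{1/4}/(2√π). -/

import Mathlib

open Real

lemma aux_finite (α : ℝ) (M : ℕ) :
    {x : ℚ | x.den ≤ M ∧ |α - (x:ℝ)| < 1}.Finite := by
  set C : ℤ := ⌈(|α| + 1) * M⌉ with hC
  apply Set.Finite.of_finite_image (f := fun x : ℚ => (x.num, x.den))
  · apply Set.Finite.subset ((Set.finite_Icc (-C) C).prod (Set.finite_Icc 0 M))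
    rintro ⟨a, b⟩ ⟨x, ⟨hden, hx⟩, heq⟩
    simp only [Prod.mk.injEq] at heq
    obtain ⟨rfl, rfl⟩ := heq
    have hxb : |(x:ℝ)| ≤ |α| + 1 := by
      have h2 : |(x:ℝ) - α| < 1 := by rwa [abs_sub_comm]
      have := abs_sub_abs_le_abs_sub (x:ℝ) α
      linarith
    have hdenpos : (0:ℕ) < x.den := x.pos
    have hnumeq : (x.num : ℝ) = (x:ℝ) * x.den := by
      rw [Rat.cast_def]
      field_simp
    have hnum : |(x.num : ℝ)| ≤ (|α| + 1) * M := by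
      rw [hnumeq, abs_mul]
      have : |(x.den : ℝ)| = (x.den : ℝ) := abs_of_nonneg (by positivity)
      rw [this]
      have hdM : (x.den : ℝ) ≤ M := by exact_mod_cast hden
      have h0 : (0:ℝ) ≤ |α| + 1 := by positivity
      calc |(x:ℝ)| * x.den ≤ (|α| + 1) * x.den := by
            apply mul_le_mul_of_nonneg_right hxb (by positivity)
        _ ≤ (|α| + 1) * M := by apply mul_le_mul_of_nonneg_left hdM h0
    have hceil : ((|α| + 1) * M : ℝ) ≤ (C : ℝ) := Int.le_ceil _
    constructor
    · constructor
      · have : -(C:ℝ) ≤ (x.num : ℝ) := by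
          have := neg_abs_le (x.num : ℝ); linarith
        exact_mod_cast this
      · have : (x.num : ℝ) ≤ (C:ℝ) := le_trans (le_abs_self _) (le_trans hnum hceil)
        exact_mod_cast this
    · exact ⟨Nat.zero_le _, hden⟩
  · intro x _ y _ hxy
    simp only [Prod.mk.injEq] at hxy
    exact Rat.ext hxy.1 hxy.2

lemma aux_q (α : ℝ) (hα : Irrational α) (M : ℕ) :
    ∃ (q : ℕ) (p : ℤ), M < q ∧ |(q:ℝ) * α - p| < 1 / q := by
  by_contra h
  push_neg at h
  apply Real.infinite_rat_abs_sub_lt_one_div_den_sq_of_irrational hα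
  apply (aux_finite α M).subset
  intro x hx
  simp only [Set.mem_setOf_eq] at hx ⊢
  have hdenpos : (0:ℕ) < x.den := x.pos
  have hd1 : (1:ℝ) ≤ (x.den : ℝ) := by exact_mod_cast hdenpos
  constructor
  · by_contra hd
    push_neg at hd
    have hkey := h x.den x.num hd
    apply absurd ?_ (not_lt.mpr hkey)
    have hcast : ((x:ℝ)) = (x.num : ℝ) / (x.den : ℝ) := by rw [Rat.cast_def]
    have : |(x.den:ℝ) * α - x.num| = (x.den:ℝ) * |α - (x:ℝ)| := by
      rw [← abs_of_nonneg (show (0:ℝ) ≤ (x.den:ℝ) by positivity), ← abs_mul]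
      congr 1
      rw [hcast]
      field_simp
      rw [abs_of_nonneg (show (0:ℝ) ≤ (x.den:ℝ) by positivity)]; ring
    rw [this]
    calc (x.den:ℝ) * |α - (x:ℝ)| < (x.den:ℝ) * (1 / (x.den:ℝ)^2) := by
          apply mul_lt_mul_of_pos_left hx (by positivity)
      _ = 1 / x.den := by field_simp
  · calc |α - (x:ℝ)| < 1 / (x.den:ℝ)^2 := hx
      _ ≤ 1 := by rw [div_le_one (by positivity)]; nlinarith

lemma cos_pow_bound (r x : ℝ) (hr : 0 < r) (n : ℕ) (hn : 1 ≤ n)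
    (h : (n:ℝ) * (x^2/2) < 1 - r) : r < |Real.cos x| ^ n := by
  have hn' : (1:ℝ) ≤ n := by exact_mod_cast hn
  have hx2 : x^2/2 ≤ (n:ℝ) * (x^2/2) := le_mul_of_one_le_left (by positivity) hn'
  have h0 : 0 ≤ 1 - x^2/2 := by linarith
  have hcos : 1 - x^2/2 ≤ |Real.cos x| :=
    le_trans Real.one_sub_sq_div_two_le_cos (le_abs_self _)
  have hb : 1 - (n:ℝ) * (x^2/2) ≤ (1 - x^2/2)^n := by
    have := one_add_mul_le_pow (a := -(x^2/2)) (by linarith) n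
    simpa [sub_eq_add_neg, mul_neg] using this
  calc r < 1 - (n:ℝ) * (x^2/2) := by linarith
    _ ≤ (1 - x^2/2)^n := hb
    _ ≤ |Real.cos x|^n := pow_le_pow_left₀ h0 hcos n
set_option maxHeartbeats 1600000 in
theorem stmt_10 (r : ℝ) (hr : 0 < r) (hr1 : r < 1) (α : ℝ) (hα : Irrational α) :
    {N : ℕ | 0 < N ∧
      (5:ℝ) ^ ((1:ℝ)/4) * (1 - r) ^ ((1:ℝ)/4) * (N : ℝ) ^ ((1:ℝ)/4) /
          (2 * Real.sqrt Real.pi) ≤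
        ({n : ℕ | 0 < n ∧ n ≤ N ∧
            r < |Real.cos (n * Real.pi * α)| ^ n}.ncard : ℝ)}.Infinite := by
  apply Set.infinite_of_forall_exists_gt
  intro M
  have h1r : (0:ℝ) < 1 - r := by linarith
  have hπ : (0:ℝ) < π := Real.pi_pos
  obtain ⟨q, p, hqM, hqp⟩ := aux_q α hα (max M ⌈32 * π^2 / (1-r)⌉₊)
  have hqM1 : M < q := lt_of_le_of_lt (le_max_left _ _) hqM
  have hq0 : 0 < q := lt_of_le_of_lt (Nat.zero_le _) hqM1
  have hq0' : (0:ℝ) < q := by exact_mod_cast hq0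
  have hq64 : 32 * π^2 / (1-r) ≤ (q:ℝ) := by
    refine le_trans (Nat.le_ceil _) ?_
    exact_mod_cast le_of_lt (lt_of_le_of_lt (le_max_right _ _) hqM)
  obtain ⟨B, hB⟩ : ∃ B : ℝ, B = 2 * (1 - r) * q / π ^ 2 := ⟨_, rfl⟩
  have hB64 : (64:ℝ) ≤ B := by
    rw [hB, le_div_iff₀ (by positivity)]
    rw [div_le_iff₀ h1r] at hq64
    nlinarith
  have hB0 : (0:ℝ) ≤ B := by linarith
  obtain ⟨u, hu⟩ : ∃ u : ℝ, u = B ^ ((1:ℝ)/3) := ⟨_, rfl⟩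
  obtain ⟨j, hj⟩ : ∃ j : ℕ, j = ⌊u⌋₊ := ⟨_, rfl⟩
  have hu3 : u ^ (3:ℕ) = B := by
    rw [hu, ← Real.rpow_natCast (B ^ ((1:ℝ)/3)) 3, ← Real.rpow_mul hB0]
    norm_num
  have hu4 : (4:ℝ) ≤ u := by
    have h64 : (64:ℝ) ^ ((1:ℝ)/3) = 4 := by
      rw [show (64:ℝ) = 4 ^ (3:ℕ) by norm_num, ← Real.rpow_natCast (4:ℝ) 3,
        ← Real.rpow_mul (by norm_num)]
      norm_num
    rw [hu, ← h64]
    exact Real.rpow_le_rpow (by norm_num) hB64 (by norm_num)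
  have hu0 : (0:ℝ) ≤ u := by linarith
  have hju : (j:ℝ) ≤ u := hj ▸ Nat.floor_le hu0
  have hju2 : u - 1 < (j:ℝ) := by
    have := Nat.lt_floor_add_one u
    rw [hj]
    linarith
  have hj3 : (3:ℝ) ≤ (j:ℝ) := by linarith
  have hj1 : 1 ≤ j := by exact_mod_cast show (1:ℝ) ≤ (j:ℝ) by linarith
  have hjB : (j:ℝ)^(3:ℕ) ≤ B := by
    calc (j:ℝ)^(3:ℕ) ≤ u^(3:ℕ) := pow_le_pow_left₀ (Nat.cast_nonneg j) hju 3
      _ = B := hu3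
  have hjB' : 5 * B / 32 ≤ (j:ℝ)^(3:ℕ) := by
    have h34 : 3*u/4 ≤ (j:ℝ) := by linarith
    nlinarith [pow_le_pow_left₀ (show (0:ℝ) ≤ 3*u/4 by linarith) h34 3, hu3]
  have hA : π^2 * (j:ℝ)^3 ≤ 2*(1-r)*q := by
    rw [hB, le_div_iff₀ (by positivity)] at hjB
    linarith
  have hBfact : 5*(1-r)*(q:ℝ) ≤ 16*π^2*(j:ℝ)^3 := by
    rw [hB] at hjB'
    rw [div_le_iff₀ (by norm_num : (0:ℝ) < 32)] at hjB'
    have hπ2 : (0:ℝ) < π^2 := by positivity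
    have h1 := mul_le_mul_of_nonneg_right hjB' hπ2.le
    have heq : 5*(2*(1-r)*(q:ℝ)/π^2)*π^2 = 10*(1-r)*q := by field_simp; ring
    rw [heq] at h1
    nlinarith [sq_nonneg ((j:ℝ)), hπ2]
  obtain ⟨θ, hθ⟩ : ∃ θ : ℝ, θ = q * α - p := ⟨_, rfl⟩
  have hθq : |θ| < 1/q := by rw [hθ]; exact hqp
  have hθsq : θ^2 < (1/(q:ℝ))^2 := by
    obtain ⟨ha, hb⟩ := abs_lt.mp hθq
    exact sq_lt_sq' ha hb
  have hsub : ↑((Finset.Icc 1 j).image (· * q)) ⊆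
      {n : ℕ | 0 < n ∧ n ≤ j*q ∧ r < |Real.cos (n * π * α)| ^ n} := by
    intro n hn
    simp only [Finset.coe_image, Set.mem_image, Finset.mem_coe, Finset.mem_Icc] at hn
    obtain ⟨i, ⟨hi1, hij⟩, rfl⟩ := hn
    have hi1' : (1:ℝ) ≤ (i:ℝ) := by exact_mod_cast hi1
    have hij' : (i:ℝ) ≤ (j:ℝ) := by exact_mod_cast hij
    refine ⟨Nat.mul_pos hi1 hq0, Nat.mul_le_mul_right q hij, ?_⟩
    have hrw : ((i*q : ℕ):ℝ) * π * α = ((i:ℝ)*π*θ) + ((i:ℤ)*p : ℤ) * π := by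
      rw [hθ]; push_cast; ring
    have habs1 : |(-1:ℝ)^((i:ℤ)*p)| = 1 := by
      rcases Int.even_or_odd ((i:ℤ)*p) with he|ho
      · rw [he.neg_one_zpow, abs_one]
      · rw [ho.neg_one_zpow, abs_neg, abs_one]
    rw [hrw, Real.cos_add_int_mul_pi, abs_mul, habs1, one_mul]
    apply cos_pow_bound r _ hr _ (Nat.one_le_iff_ne_zero.mpr (Nat.mul_ne_zero
      (Nat.one_le_iff_ne_zero.mp hi1) hq0.ne'))
    have h1 : ((i*q:ℕ):ℝ) * (((i:ℝ)*π*θ)^2/2) = (i:ℝ)^3 * π^2 * θ^2 * q / 2 := by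
      push_cast; ring
    have h2 : (i:ℝ)^3 * π^2 * θ^2 * q / 2 < (i:ℝ)^3 * π^2 * (1/(q:ℝ))^2 * q / 2 := by
      gcongr
    have h3 : (i:ℝ)^3 * π^2 * (1/(q:ℝ))^2 * q / 2 = π^2 * (i:ℝ)^3 / (2*q) := by
      field_simp
    have h4 : π^2*(i:ℝ)^3/(2*(q:ℝ)) ≤ π^2*(j:ℝ)^3/(2*q) := by gcongr
    have h5 : π^2*(j:ℝ)^3/(2*(q:ℝ)) ≤ 1 - r := by
      rw [div_le_iff₀ (by positivity)]
      linarith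
    rw [h1]
    calc (i:ℝ)^3 * π^2 * θ^2 * q / 2 < (i:ℝ)^3 * π^2 * (1/(q:ℝ))^2 * q / 2 := h2
      _ = π^2 * (i:ℝ)^3 / (2*q) := h3
      _ ≤ π^2 * (j:ℝ)^3 / (2*q) := h4
      _ ≤ 1 - r := h5
  have hfin : {n : ℕ | 0 < n ∧ n ≤ j*q ∧ r < |Real.cos (n * π * α)| ^ n}.Finite :=
    (Set.finite_Icc 1 (j*q)).subset (fun n hn => Set.mem_Icc.mpr ⟨hn.1, hn.2.1⟩)
  have hcard : ((Finset.Icc 1 j).image (· * q)).card = j := by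
    rw [Finset.card_image_of_injective _
      (fun a b hab => Nat.eq_of_mul_eq_mul_right hq0 hab)]
    simp
  have hcount : j ≤ {n : ℕ | 0 < n ∧ n ≤ j*q ∧ r < |Real.cos (n * π * α)| ^ n}.ncard := by
    calc j = ((Finset.Icc 1 j).image (· * q)).card := hcard.symm
      _ = (↑((Finset.Icc 1 j).image (· * q)) : Set ℕ).ncard := (Set.ncard_coe_finset _).symm
      _ ≤ _ := Set.ncard_le_ncard hsub hfin
  refine ⟨j*q, ⟨Nat.mul_pos hj1 hq0, ?_⟩, lt_of_lt_of_le hqM1 (Nat.le_mul_of_pos_left q hj1)⟩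
  clear hsub hfin hcard
  have hLHS : (5:ℝ)^((1:ℝ)/4) * (1-r)^((1:ℝ)/4) * ((j*q : ℕ):ℝ)^((1:ℝ)/4) /
      (2*Real.sqrt π) ≤ (j:ℝ) := by
    rw [div_le_iff₀ (by positivity)]
    have hmul : (5*(1-r)*((j*q:ℕ):ℝ))^((1:ℝ)/4)
        = (5:ℝ)^((1:ℝ)/4) * (1-r)^((1:ℝ)/4) * ((j*q:ℕ):ℝ)^((1:ℝ)/4) := by
      rw [Real.mul_rpow (by positivity) (Nat.cast_nonneg _),
        Real.mul_rpow (by norm_num) h1r.le]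
    rw [← hmul]
    have h4 : (j:ℝ) * (2*Real.sqrt π) = (((j:ℝ)*(2*Real.sqrt π))^(4:ℕ))^((1:ℝ)/4) := by
      rw [← Real.rpow_natCast ((j:ℝ)*(2*Real.sqrt π)) 4, ← Real.rpow_mul (by positivity)]
      norm_num
    rw [h4]
    apply Real.rpow_le_rpow (by positivity) ?_ (by norm_num)
    have hsq : Real.sqrt π ^ (2:ℕ) = π := Real.sq_sqrt hπ.le
    have expand : ((j:ℝ)*(2*Real.sqrt π))^(4:ℕ) = 16 * π^2 * (j:ℝ)^4 := by
      have h2 : (Real.sqrt π)^(4:ℕ) = π^2 := by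
        rw [show (4:ℕ) = 2*2 from rfl, pow_mul, hsq]
      rw [mul_pow, mul_pow, h2]; ring
    rw [expand]
    push_cast
    nlinarith [mul_le_mul_of_nonneg_right hBfact (Nat.cast_nonneg j : (0:ℝ) ≤ (j:ℝ))]
  exact le_trans hLHS (Nat.cast_le.mpr hcount)
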